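/- Let X := { f ∈ H¹(ℝ) : x ↦ x² f(x) ∈ L²(ℝ) } with norm ‖f‖²_X := ‖f′‖²_{L²} + ∫_ℝ |f(x)|² (1 + x⁴) dx. Then there exists a constant C > 0 such that for every f ∈ X, Σ_{k=0}^∞ ‖f‖_{L^∞(k, k+1)} ≤ C ‖f‖_X; consequently, for every signed Borel measure ν on [0,∞), |∫₀^∞ f dν| ≤ C ‖f‖_X · sup_{x ≥ 0} |ν|([x, x+1]). -/

import Mathlib

open MeasureTheory Set Filter
open scoped ENNReal Topology

noncomputable section

/-- Membership in `X = { f ∈ H¹(ℝ) : x² f(x) ∈ L²(ℝ) }` (with the continuous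
representative, which is differentiable with square-integrable derivative). -/
def MemX (f : ℝ → ℝ) : Prop :=
  Differentiable ℝ f ∧ MemLp f 2 (volume : Measure ℝ) ∧
    MemLp (deriv f) 2 (volume : Measure ℝ) ∧
    MemLp (fun x => x ^ 2 * f x) 2 (volume : Measure ℝ)

/-- The norm `‖f‖²_X = ‖f′‖²_{L²} + ∫ |f(x)|² (1 + x⁴) dx`. -/
def normX (f : ℝ → ℝ) : ℝ :=
  Real.sqrt (((eLpNorm (deriv f) 2 (volume : Measure ℝ)).toReal) ^ 2 +
    ∫ x : ℝ, (f x) ^ 2 * (1 + x ^ 4))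

def wgt (k : ℕ) : ℝ := Real.sqrt (1 + (k:ℝ)^4)
lemma wgt_one_le (k : ℕ) : 1 ≤ wgt k := by
  have := Real.sqrt_le_sqrt (show (1:ℝ) ≤ 1 + (k:ℝ)^4 from le_add_of_nonneg_right (by positivity))
  simpa [wgt] using this
lemma wgt_pos (k : ℕ) : 0 < wgt k := lt_of_lt_of_le one_pos (wgt_one_le k)
lemma wgt_sq (k : ℕ) : wgt k ^ 2 = 1 + (k:ℝ)^4 := Real.sq_sqrt (by positivity)

lemma interval_bound (f : ℝ → ℝ) (hdiff : Differentiable ℝ f)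
    (hf'2 : MemLp (deriv f) 2 (volume : Measure ℝ))
    (hA_int : Integrable (fun x => (deriv f x)^2) (volume : Measure ℝ))
    (hB_int : Integrable (fun x => f x^2*(1+x^4)) (volume : Measure ℝ))
    (k : ℕ) {x : ℝ} (hx : x ∈ Icc (k:ℝ) (k+1)) :
    f x^2 ≤ (2*(∫ y in Icc (k:ℝ) (k+1), f y^2*(1+y^4)) +
      ∫ y in Icc (k:ℝ) (k+1), (deriv f y)^2) / wgt k := by
  have hcont : Continuous f := hdiff.continuous
  set I : Set ℝ := Icc (k:ℝ) (k+1) with hI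
  have hIm : MeasurableSet I := measurableSet_Icc
  have hIvol : volume I = ENNReal.ofReal 1 := by
    rw [hI, Real.volume_Icc]; norm_num
  have hIvolR : (volume I).toReal = 1 := by rw [hIvol]; simp
  -- integrability on I
  have hf'int : IntegrableOn (deriv f) I volume := by
    haveI : IsFiniteMeasure (volume.restrict I) :=
      ⟨by rw [Measure.restrict_apply_univ, hIvol]; exact ENNReal.ofReal_lt_top⟩
    have h1 : MemLp (deriv f) 2 (volume.restrict I) := hf'2.restrict I
    exact memLp_one_iff_integrable.mp (h1.mono_exponent (by norm_num))
  have hff' : IntegrableOn (fun y => f y * deriv f y) I volume :=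
    IntegrableOn.continuousOn_mul hcont.continuousOn hf'int isCompact_Icc
  have habsff' : IntegrableOn (fun y => |f y * deriv f y|) I volume := hff'.abs
  have hf2I : IntegrableOn (fun y => f y^2) I volume := (hcont.pow 2).integrableOn_Icc
  set D : ℝ := ∫ y in I, |f y * deriv f y| with hD
  have h2ff'int : IntegrableOn (fun s => 2 * f s * deriv f s) I volume := by
    simpa [mul_assoc, IntegrableOn] using hff'.const_mul 2
  have habs2 : IntegrableOn (fun s => |2 * f s * deriv f s|) I volume := h2ff'int.abs
  -- FTC step
  have hFTC : ∀ x ∈ I, ∀ y ∈ I, f x^2 ≤ f y^2 + 2*D := by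
    intro x hx y hy
    have hkk : (k:ℝ) ≤ (k:ℝ)+1 := by linarith
    have hsub : uIcc y x ⊆ I := by
      rw [hI, ← uIcc_of_le hkk]
      exact uIcc_subset_uIcc (by rwa [uIcc_of_le hkk]) (by rwa [uIcc_of_le hkk])
    have hderiv : ∀ t ∈ uIcc y x, HasDerivAt (fun s => f s^2) (2 * f t * deriv f t) t := by
      intro t _
      have h := ((hdiff t).hasDerivAt).fun_pow 2
      simpa [mul_comm, mul_assoc, pow_one] using h
    have hii : IntervalIntegrable (fun s => 2 * f s * deriv f s) volume y x :=
      (h2ff'int.mono_set hsub).intervalIntegrable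
    have heq : ∫ s in y..x, 2 * f s * deriv f s = f x^2 - f y^2 :=
      intervalIntegral.integral_eq_sub_of_hasDerivAt hderiv hii
    have hIoc : uIoc y x ⊆ I := fun t ht => hsub (Ioc_subset_Icc_self ht)
    have hle : f x^2 - f y^2 ≤ 2*D := by
      rw [← heq]
      calc ∫ s in y..x, 2*f s*deriv f s ≤ |∫ s in y..x, 2*f s*deriv f s| := le_abs_self _
        _ ≤ ∫ s in uIoc y x, |2*f s*deriv f s| := by
            simpa only [Real.norm_eq_abs] using
              intervalIntegral.norm_integral_le_integral_norm_uIoc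
                (f := fun s => 2*f s*deriv f s) (a := y) (b := x) (μ := volume)
        _ ≤ ∫ s in I, |2*f s*deriv f s| := by
            refine setIntegral_mono_set habs2 ?_ (HasSubset.Subset.eventuallyLE hIoc)
            exact Filter.Eventually.of_forall (fun s => abs_nonneg _)
        _ = 2*D := by
            rw [hD, ← integral_const_mul]
            refine setIntegral_congr_fun hIm (fun s _ => ?_)
            rw [mul_assoc, abs_mul]; norm_num
    linarith
  -- averaging
  have havg : f x^2 ≤ (∫ y in I, f y^2) + 2*D := by
    have h := setIntegral_ge_of_const_le (c := f x^2 - 2*D) hIm (by rw [hIvol]; exact ENNReal.ofReal_ne_top)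
      (fun y hy => by linarith [hFTC x hx y hy]) hf2I
    rw [measureReal_def, hIvolR, one_smul] at h
    linarith
  -- AM-GM on the cross term
  have hDle : 2*D ≤ wgt k * (∫ y in I, f y^2) + (∫ y in I, (deriv f y)^2) / wgt k := by
    have hw := wgt_pos k
    have hmono : (∫ y in I, 2*|f y * deriv f y|) ≤
        ∫ y in I, (wgt k * f y^2 + (deriv f y)^2 / wgt k) := by
      refine setIntegral_mono_on (habsff'.const_mul 2)
        ((hf2I.const_mul (wgt k)).add ((hA_int.integrableOn).div_const (wgt k))) hIm ?_
      intro y _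
      have h2 : 2*(|f y| * |deriv f y|) - wgt k * f y^2 ≤ (deriv f y)^2 / wgt k := by
        rw [le_div_iff₀ hw, ← sq_abs (f y), ← sq_abs (deriv f y)]
        nlinarith [sq_nonneg (wgt k * |f y| - |deriv f y|)]
      rw [abs_mul]
      linarith
    rw [integral_const_mul,
      integral_add (hf2I.const_mul (wgt k)) ((hA_int.integrableOn).div_const (wgt k)),
      integral_const_mul, integral_div] at hmono
    linarith
  -- weight step
  have hWB : (1 + wgt k) * (∫ y in I, f y^2) ≤ 2 * (∫ y in I, f y^2*(1+y^4)) / wgt k := by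
    have hw := wgt_pos k
    have hw1 := wgt_one_le k
    have hmono : (∫ y in I, (1+wgt k) * f y^2) ≤ ∫ y in I, (2/wgt k) * (f y^2*(1+y^4)) := by
      refine setIntegral_mono_on (hf2I.const_mul _) ((hB_int.integrableOn).const_mul _) hIm ?_
      intro y hy
      have hk4 : (k:ℝ)^4 ≤ y^4 := pow_le_pow_left₀ (Nat.cast_nonneg k) hy.1 4
      have hws := wgt_sq k
      have hf2 : (0:ℝ) ≤ f y^2 := sq_nonneg _
      rw [div_mul_eq_mul_div, le_div_iff₀ hw]
      have hww : wgt k ≤ wgt k^2 := by nlinarith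
      have h3 : f y^2 * wgt k ≤ f y^2 * wgt k^2 := mul_le_mul_of_nonneg_left hww hf2
      have h4 : f y^2 * (k:ℝ)^4 ≤ f y^2 * y^4 := mul_le_mul_of_nonneg_left hk4 hf2
      have h5 : f y^2 * wgt k^2 = f y^2 + f y^2 * (k:ℝ)^4 := by rw [hws]; ring
      nlinarith [h3, h4, h5]
    rw [integral_const_mul, integral_const_mul] at hmono
    calc (1 + wgt k) * (∫ y in I, f y^2) ≤ (2/wgt k) * ∫ y in I, f y^2*(1+y^4) := hmono
      _ = 2 * (∫ y in I, f y^2*(1+y^4)) / wgt k := by ring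
  -- combine
  have hw := wgt_pos k
  calc f x^2 ≤ (∫ y in I, f y^2) + 2*D := havg
    _ ≤ (∫ y in I, f y^2) + (wgt k * (∫ y in I, f y^2) + (∫ y in I, (deriv f y)^2) / wgt k) := by
        linarith
    _ = (1 + wgt k) * (∫ y in I, f y^2) + (∫ y in I, (deriv f y)^2) / wgt k := by ring
    _ ≤ 2 * (∫ y in I, f y^2*(1+y^4)) / wgt k + (∫ y in I, (deriv f y)^2) / wgt k := by
        linarith [hWB]
    _ = (2*(∫ y in I, f y^2*(1+y^4)) + ∫ y in I, (deriv f y)^2) / wgt k := by ring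

def Sc : ℝ := ∑' k : ℕ, 1 / wgt k

lemma summable_inv_wgt : Summable (fun k : ℕ => 1 / wgt k) := by
  have h1 : Summable (fun k : ℕ => 4 * (1 / ((k:ℝ)+1)^2)) := by
    refine Summable.mul_left 4 ?_
    have := (summable_nat_add_iff (f := fun n : ℕ => 1 / (n:ℝ)^2) 1).2
      (Real.summable_one_div_nat_pow.2 one_lt_two)
    simpa using this
  refine Summable.of_nonneg_of_le (fun k => le_of_lt (one_div_pos.2 (wgt_pos k)))
    (fun k => ?_) h1
  have hs : ((1:ℝ) + (k:ℝ)^2)/2 ≤ wgt k := by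
    rw [show ((1:ℝ) + (k:ℝ)^2)/2 = Real.sqrt ((((1:ℝ)+(k:ℝ)^2)/2)^2) by
      rw [Real.sqrt_sq (by positivity)]]
    exact Real.sqrt_le_sqrt (by nlinarith [sq_nonneg ((k:ℝ)^2 - 1)])
  have hpos : (0:ℝ) < (1 + (k:ℝ)^2)/2 := by positivity
  calc 1 / wgt k ≤ 1 / ((1 + (k:ℝ)^2)/2) := one_div_le_one_div_of_le hpos hs
    _ ≤ 4 * (1 / ((k:ℝ)+1)^2) := by
        rw [mul_one_div, div_le_div_iff₀ (by positivity) (by positivity)]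
        nlinarith [sq_nonneg ((k:ℝ)-1), sq_nonneg (k:ℝ)]

lemma Sc_nonneg : 0 ≤ Sc := tsum_nonneg (fun k => le_of_lt (one_div_pos.2 (wgt_pos k)))

lemma iUnion_Ico_nat : (⋃ k : ℕ, Ico (k:ℝ) (k+1)) = Ici (0:ℝ) := by
  ext x
  simp only [mem_iUnion, mem_Ico, mem_Ici]
  constructor
  · rintro ⟨k, hk, -⟩; exact le_trans (by positivity) hk
  · intro hx
    exact ⟨⌊x⌋₊, Nat.floor_le hx, Nat.lt_floor_add_one x⟩

lemma pairwise_Ico_nat : Pairwise (Function.onFun Disjoint fun k : ℕ => Ico (k:ℝ) (k+1)) := by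
  intro i j hij
  rw [Function.onFun, Set.Ico_disjoint_Ico]
  rcases hij.lt_or_gt with h | h
  · have : (i:ℝ) + 1 ≤ (j:ℝ) := by exact_mod_cast h
    exact le_trans (min_le_left _ _) (le_trans this (le_max_right _ _))
  · have : (j:ℝ) + 1 ≤ (i:ℝ) := by exact_mod_cast h
    exact le_trans (min_le_right _ _) (le_trans this (le_max_left _ _))

lemma sqrt_mul_le_half_add {a b : ℝ} (ha : 0 ≤ a) (hb : 0 ≤ b) :
    Real.sqrt (a*b) ≤ (a+b)/2 := by
  rw [show (a+b)/2 = Real.sqrt (((a+b)/2)^2) by rw [Real.sqrt_sq (by positivity)]]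
  exact Real.sqrt_le_sqrt (by nlinarith [sq_nonneg (a-b)])

lemma key (f : ℝ → ℝ) (hf : MemX f) :
    ∃ r : ℕ → ℝ, (∀ k, 0 ≤ r k) ∧ Summable r ∧
      (∑' k, r k) ≤ (Sc + 2) * normX f ∧
      ∀ k : ℕ, ∀ x ∈ Icc (k:ℝ) (k+1), |f x| ≤ r k := by
  obtain ⟨hdiff, hf2, hf'2, hxf2⟩ := hf
  have hsq : ∀ (g : ℝ → ℝ), MemLp g 2 (volume : Measure ℝ) →
      Integrable (fun x => g x ^ 2) (volume : Measure ℝ) := by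
    intro g hg
    have h := hg.integrable_norm_rpow two_ne_zero ENNReal.ofNat_ne_top
    refine h.congr (Filter.Eventually.of_forall fun x => ?_)
    simp only [show ((2:ℝ≥0∞).toReal) = ((2:ℕ):ℝ) from by norm_num, Real.rpow_natCast,
      Real.norm_eq_abs, sq_abs]
  have hA_int : Integrable (fun x => (deriv f x)^2) (volume : Measure ℝ) := hsq _ hf'2
  have hf2sq := hsq _ hf2
  have hxfsq := hsq _ hxf2
  have hB_int : Integrable (fun x => f x^2*(1+x^4)) (volume : Measure ℝ) := by
    refine (hf2sq.add hxfsq).congr (Filter.Eventually.of_forall fun x => ?_)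
    simp only [Pi.add_apply]; ring
  set B := ∫ x : ℝ, f x^2 * (1+x^4) with hBdef
  have hB0 : 0 ≤ B := integral_nonneg fun x => by positivity
  set Ar := ∫ x : ℝ, (deriv f x)^2 with hArdef
  have hAr0 : 0 ≤ Ar := integral_nonneg fun x => sq_nonneg _
  have hAeq : (eLpNorm (deriv f) 2 (volume : Measure ℝ)).toReal ^ 2 = Ar := by
    rw [hf'2.eLpNorm_eq_integral_rpow_norm two_ne_zero ENNReal.ofNat_ne_top]
    rw [ENNReal.toReal_ofReal (Real.rpow_nonneg
      (integral_nonneg fun x => Real.rpow_nonneg (norm_nonneg _) _) _)]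
    have hI : (∫ x : ℝ, ‖deriv f x‖ ^ (2:ℝ≥0∞).toReal) = Ar := by
      rw [hArdef]; congr 1; funext x
      simp only [show ((2:ℝ≥0∞).toReal) = ((2:ℕ):ℝ) from by norm_num, Real.rpow_natCast,
        Real.norm_eq_abs, sq_abs]
    rw [hI]
    rw [show ((2:ℝ≥0∞).toReal)⁻¹ = ((2:ℝ))⁻¹ by norm_num,
      ← Real.rpow_natCast (Ar ^ ((2:ℝ)⁻¹)) 2, ← Real.rpow_mul hAr0]
    norm_num
  have hnormsq : normX f ^ 2 = Ar + B := by
    rw [normX, Real.sq_sqrt (by rw [hAeq]; exact add_nonneg hAr0 hB0), hAeq]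
  have hnX0 : 0 ≤ normX f := Real.sqrt_nonneg _
  set Ak := fun k : ℕ => ∫ y in Icc (k:ℝ) (k+1), (deriv f y)^2 with hAk
  set Bk := fun k : ℕ => ∫ y in Icc (k:ℝ) (k+1), f y^2*(1+y^4) with hBk
  have hAk0 : ∀ k, 0 ≤ Ak k := fun k =>
    setIntegral_nonneg measurableSet_Icc fun y _ => sq_nonneg _
  have hBk0 : ∀ k, 0 ≤ Bk k := fun k =>
    setIntegral_nonneg measurableSet_Icc fun y _ => by positivity
  have hsum : ∀ (g : ℝ → ℝ), Integrable g (volume : Measure ℝ) → (∀ x, 0 ≤ g x) →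
      Summable (fun k : ℕ => ∫ y in Icc (k:ℝ) (k+1), g y) ∧
      (∑' k : ℕ, ∫ y in Icc (k:ℝ) (k+1), g y) ≤ ∫ x, g x := by
    intro g hg hg0
    have hIcoIcc : ∀ k : ℕ, (∫ y in Icc (k:ℝ) (k+1), g y) = ∫ y in Ico (k:ℝ) (k+1), g y :=
      fun k => integral_Icc_eq_integral_Ico
    have hhs : HasSum (fun k : ℕ => ∫ y in Ico (k:ℝ) (k+1), g y) (∫ y in Ici (0:ℝ), g y) := by
      have := hasSum_integral_iUnion (μ := volume) (f := g)
        (fun k : ℕ => measurableSet_Ico) pairwise_Ico_nat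
        (by rw [iUnion_Ico_nat]; exact hg.integrableOn)
      rwa [iUnion_Ico_nat] at this
    constructor
    · exact (hhs.summable).congr fun k => (hIcoIcc k).symm
    · rw [tsum_congr hIcoIcc, hhs.tsum_eq]
      exact setIntegral_le_integral hg (Filter.Eventually.of_forall hg0)
  obtain ⟨hAsumm, hAsum_le⟩ := hsum _ hA_int (fun x => sq_nonneg _)
  obtain ⟨hBsumm, hBsum_le⟩ := hsum _ hB_int (fun x => by positivity)
  set q := fun k : ℕ => 2 * Bk k + Ak k with hq
  have hq0 : ∀ k, 0 ≤ q k := fun k => by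
    have h1 := hAk0 k; have h2 := hBk0 k
    show (0:ℝ) ≤ 2 * Bk k + Ak k
    linarith
  have hqsumm : Summable q := (hBsumm.mul_left 2).add hAsumm
  have hqsum_le : (∑' k, q k) ≤ 2 * normX f ^ 2 := by
    rw [show q = (fun k => 2 * Bk k + Ak k) from rfl,
      Summable.tsum_add (hBsumm.mul_left 2) hAsumm, tsum_mul_left, hnormsq]
    linarith [hBsum_le, hAsum_le]
  set r := fun k : ℕ => Real.sqrt (q k / wgt k) with hr
  have hr0 : ∀ k, 0 ≤ r k := fun k => Real.sqrt_nonneg _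
  have habs : ∀ k : ℕ, ∀ x ∈ Icc (k:ℝ) (k+1), |f x| ≤ r k := by
    intro k x hx
    have h := interval_bound f hdiff hf'2 hA_int hB_int k hx
    calc |f x| = Real.sqrt (f x^2) := (Real.sqrt_sq_eq_abs _).symm
      _ ≤ r k := Real.sqrt_le_sqrt h
  by_cases hnz : normX f = 0
  · have hq_eq : ∀ k, q k = 0 := by
      intro k
      have h1 : q k ≤ ∑' k, q k := Summable.le_tsum hqsumm k fun j _ => hq0 j
      rw [hnz] at hqsum_le
      simp only [ne_eq, OfNat.ofNat_ne_zero, not_false_eq_true, zero_pow, mul_zero] at hqsum_le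
      linarith [hq0 k]
    have hrz : r = fun _ => (0:ℝ) := funext fun k => by
      show Real.sqrt (q k / wgt k) = 0
      rw [hq_eq k]; simp
    refine ⟨r, hr0, ?_, ?_, habs⟩
    · rw [hrz]; exact summable_zero
    · rw [hrz, tsum_zero, hnz, mul_zero]
  · have ht : 0 < normX f := lt_of_le_of_ne hnX0 (Ne.symm hnz)
    have hbound : ∀ k, r k ≤ (q k / normX f + normX f * (1 / wgt k))/2 := by
      intro k
      have hw := wgt_pos k
      have hconv : q k / wgt k = (q k / normX f) * (normX f * (1/wgt k)) := by
        field_simp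
      show Real.sqrt (q k / wgt k) ≤ _
      rw [hconv]
      exact sqrt_mul_le_half_add (div_nonneg (hq0 k) hnX0)
        (mul_nonneg hnX0 (le_of_lt (one_div_pos.2 hw)))
    have hrsumm_aux : Summable (fun k => (q k / normX f + normX f * (1/wgt k))/2) :=
      ((hqsumm.div_const _).add (summable_inv_wgt.mul_left _)).div_const 2
    have hrsumm : Summable r := Summable.of_nonneg_of_le hr0 hbound hrsumm_aux
    refine ⟨r, hr0, hrsumm, ?_, habs⟩
    have h1 : (∑' k, r k) ≤ ∑' k, (q k / normX f + normX f * (1/wgt k))/2 :=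
      Summable.tsum_le_tsum hbound hrsumm hrsumm_aux
    have h2 : (∑' k, (q k / normX f + normX f * (1/wgt k))/2)
        = ((∑' k, q k)/normX f + normX f * Sc)/2 := by
      rw [tsum_div_const, Summable.tsum_add (hqsumm.div_const _) (summable_inv_wgt.mul_left _),
        tsum_div_const, tsum_mul_left]
      rfl
    have h3 : (∑' k, q k)/normX f ≤ 2*normX f := by
      rw [div_le_iff₀ ht]
      calc (∑' k, q k) ≤ 2*normX f^2 := hqsum_le
        _ = 2*normX f*normX f := by ring
    calc (∑' k, r k) ≤ ((∑' k, q k)/normX f + normX f * Sc)/2 := by rw [← h2]; exact h1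
      _ ≤ (2*normX f + normX f * Sc)/2 := by linarith
      _ ≤ (Sc + 2)*normX f := by nlinarith [Sc_nonneg, ht]

/-- `Σ_k ‖f‖_{L^∞(k,k+1)} ≤ C ‖f‖_X` for `f ∈ X`, and consequently
`|∫₀^∞ f dν| ≤ C ‖f‖_X · sup_{x≥0} |ν|([x,x+1])` for every signed Borel measure
`ν` on `[0,∞)`, represented as a difference `P − N` of non-negative measures
supported on `[0,∞)` (so that `|ν| ≤ P + N`). -/
theorem stmt14 :
    ∃ C : ℝ, 0 < C ∧
      (∀ f : ℝ → ℝ, MemX f →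
        (∑' k : ℕ, ⨆ x ∈ Icc (k : ℝ) (k + 1), |f x|) ≤ C * normX f) ∧
      (∀ f : ℝ → ℝ, MemX f →
        ∀ P N : Measure ℝ, P (Iio (0 : ℝ)) = 0 → N (Iio (0 : ℝ)) = 0 →
          ENNReal.ofReal |(∫ x, f x ∂P) - ∫ x, f x ∂N| ≤
            ENNReal.ofReal (C * normX f) *
              ⨆ x ∈ Ici (0 : ℝ), (P (Icc x (x + 1)) + N (Icc x (x + 1)))) := by
  refine ⟨Sc + 2, by linarith [Sc_nonneg], ?_, ?_⟩
  · intro f hf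
    obtain ⟨r, hr0, hrsumm, hrsum, habs⟩ := key f hf
    have hu0 : ∀ k : ℕ, (0:ℝ) ≤ ⨆ x ∈ Icc (k:ℝ) (k+1), |f x| := fun k =>
      Real.iSup_nonneg fun x => Real.iSup_nonneg fun _ => abs_nonneg _
    have hule : ∀ k : ℕ, (⨆ x ∈ Icc (k:ℝ) (k+1), |f x|) ≤ r k := fun k =>
      Real.iSup_le (fun x => Real.iSup_le (fun hx => habs k x hx) (hr0 k)) (hr0 k)
    have husumm : Summable (fun k : ℕ => ⨆ x ∈ Icc (k:ℝ) (k+1), |f x|) :=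
      Summable.of_nonneg_of_le hu0 hule hrsumm
    exact le_trans (Summable.tsum_le_tsum hule husumm hrsumm) hrsum
  · intro f hf P N hP hN
    obtain ⟨r, hr0, hrsumm, hrsum, habs⟩ := key f hf
    have hcont : Continuous f := hf.1.continuous
    set M := ⨆ x ∈ Ici (0:ℝ), (P (Icc x (x+1)) + N (Icc x (x+1))) with hM
    have hkey : ∀ (μ : Measure ℝ), μ (Iio 0) = 0 →
        (∫⁻ x, ENNReal.ofReal |f x| ∂μ) ≤
          ∑' k : ℕ, ENNReal.ofReal (r k) * μ (Icc (k:ℝ) (k+1)) := by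
      intro μ hμ
      have h1 : (∫⁻ x, ENNReal.ofReal |f x| ∂μ)
          = ∫⁻ x in Ici (0:ℝ), ENNReal.ofReal |f x| ∂μ := by
        rw [← lintegral_add_compl (fun x => ENNReal.ofReal |f x|)
          (measurableSet_Ici (a := (0:ℝ))), show (Ici (0:ℝ))ᶜ = Iio 0 from compl_Ici,
          setLIntegral_measure_zero _ _ hμ, add_zero]
      rw [h1, ← iUnion_Ico_nat, lintegral_iUnion (fun k => measurableSet_Ico) pairwise_Ico_nat]
      refine ENNReal.tsum_le_tsum fun k => ?_
      calc (∫⁻ x in Ico (k:ℝ) (k+1), ENNReal.ofReal |f x| ∂μ)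
          ≤ ∫⁻ _ in Ico (k:ℝ) (k+1), ENNReal.ofReal (r k) ∂μ := by
            refine setLIntegral_mono measurable_const (fun x hx => ?_)
            exact ENNReal.ofReal_le_ofReal (habs k x (Ico_subset_Icc_self hx))
        _ = ENNReal.ofReal (r k) * μ (Ico (k:ℝ) (k+1)) := by
            rw [setLIntegral_const]
        _ ≤ ENNReal.ofReal (r k) * μ (Icc (k:ℝ) (k+1)) :=
            mul_le_mul_right (measure_mono Ico_subset_Icc_self) _
    have htot : (∫⁻ x, ENNReal.ofReal |f x| ∂P) + (∫⁻ x, ENNReal.ofReal |f x| ∂N)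
        ≤ ENNReal.ofReal (∑' k, r k) * M := by
      calc (∫⁻ x, ENNReal.ofReal |f x| ∂P) + (∫⁻ x, ENNReal.ofReal |f x| ∂N)
          ≤ (∑' k : ℕ, ENNReal.ofReal (r k) * P (Icc (k:ℝ) (k+1)))
            + ∑' k : ℕ, ENNReal.ofReal (r k) * N (Icc (k:ℝ) (k+1)) :=
            add_le_add (hkey P hP) (hkey N hN)
        _ = ∑' k : ℕ, ENNReal.ofReal (r k) *
              (P (Icc (k:ℝ) (k+1)) + N (Icc (k:ℝ) (k+1))) := by
            rw [← ENNReal.tsum_add]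
            exact tsum_congr fun k => (mul_add _ _ _).symm
        _ ≤ ∑' k : ℕ, ENNReal.ofReal (r k) * M := by
            refine ENNReal.tsum_le_tsum fun k => mul_le_mul_right ?_ _
            exact le_iSup₂ (f := fun (x : ℝ) (_ : x ∈ Ici (0:ℝ)) =>
              P (Icc x (x+1)) + N (Icc x (x+1))) (k:ℝ) (mem_Ici.2 (Nat.cast_nonneg k))
        _ = ENNReal.ofReal (∑' k, r k) * M := by
            rw [ENNReal.tsum_mul_right, ENNReal.ofReal_tsum_of_nonneg hr0 hrsumm]
    have hfin : ENNReal.ofReal (∑' k, r k) * M ≤ ENNReal.ofReal ((Sc+2) * normX f) * M :=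
      mul_le_mul_left (ENNReal.ofReal_le_ofReal hrsum) _
    by_cases hint : Integrable f P ∧ Integrable f N
    · obtain ⟨hPi, hNi⟩ := hint
      have habs1 : |(∫ x, f x ∂P) - ∫ x, f x ∂N| ≤ (∫ x, |f x| ∂P) + ∫ x, |f x| ∂N := by
        refine le_trans (abs_sub _ _) (add_le_add ?_ ?_)
        · simpa [Real.norm_eq_abs] using norm_integral_le_integral_norm (μ := P) f
        · simpa [Real.norm_eq_abs] using norm_integral_le_integral_norm (μ := N) f
      calc ENNReal.ofReal |(∫ x, f x ∂P) - ∫ x, f x ∂N|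
          ≤ ENNReal.ofReal ((∫ x, |f x| ∂P) + ∫ x, |f x| ∂N) :=
            ENNReal.ofReal_le_ofReal habs1
        _ = ENNReal.ofReal (∫ x, |f x| ∂P) + ENNReal.ofReal (∫ x, |f x| ∂N) :=
            ENNReal.ofReal_add (integral_nonneg fun x => abs_nonneg _)
              (integral_nonneg fun x => abs_nonneg _)
        _ = (∫⁻ x, ENNReal.ofReal |f x| ∂P) + (∫⁻ x, ENNReal.ofReal |f x| ∂N) := by
            have e1 := ofReal_integral_norm_eq_lintegral_enorm hPi
            have e2 := ofReal_integral_norm_eq_lintegral_enorm hNi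
            simp only [Real.norm_eq_abs, ← ofReal_norm_eq_enorm] at e1 e2
            rw [e1, e2]
        _ ≤ ENNReal.ofReal (∑' k, r k) * M := htot
        _ ≤ ENNReal.ofReal ((Sc+2) * normX f) * M := hfin
    · have htop : (∫⁻ x, ENNReal.ofReal |f x| ∂P) + (∫⁻ x, ENNReal.ofReal |f x| ∂N) = ⊤ := by
        have hconv : ∀ (μ : Measure ℝ), ¬ Integrable f μ →
            (∫⁻ x, ENNReal.ofReal |f x| ∂μ) = ⊤ := by
          intro μ hni
          have h1 : ¬ HasFiniteIntegral f μ := fun hfi =>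
            hni ⟨hcont.aestronglyMeasurable, hfi⟩
          rw [HasFiniteIntegral, not_lt, top_le_iff] at h1
          rw [← h1]
          congr 1
          funext x
          rw [← ofReal_norm_eq_enorm, Real.norm_eq_abs]
        rcases not_and_or.mp hint with h | h
        · rw [hconv P h]; simp
        · rw [hconv N h]; simp
      have h2 : (⊤:ℝ≥0∞) ≤ ENNReal.ofReal ((Sc+2) * normX f) * M := by
        rw [← htop]
        exact le_trans htot hfin
      exact le_trans le_top h2

end
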